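/- For ideal MHD with γ-law gas, the x-component of the potential flux, defined as ψ₁(v) = vᵀf₁ + φ(v)B₁ − F₁, equals (ρ + β|B|²)u₁, i.e., ψ₁ = φ(potential) · u₁. -/
import Mathlib


/-- For ideal MHD with γ-law gas, the x-component of the potential flux,
ψ₁(v) = vᵀf₁ + φ(v)B₁ − F₁, equals (ρ + β|B|²)u₁. -/
theorem mhd_potential_flux_x (γ ρ p E s β : ℝ) (u B : Fin 3 → ℝ)
    (hρ : 0 < ρ) (hp : 0 < p) (hγ : 1 < γ)
    (hE : E = p / (γ - 1) + ρ / 2 * (u 0 ^ 2 + u 1 ^ 2 + u 2 ^ 2)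
            + (B 0 ^ 2 + B 1 ^ 2 + B 2 ^ 2) / 2)
    (hs : s = Real.log (p * ρ ^ (-γ)))
    (hβ : β = ρ / (2 * p)) :
    -- vᵀ f₁ with
    -- v = ((γ−s)/(γ−1) − β|u|², 2βu, 2βB, −2β) and
    -- f₁ = (ρu₁, ρu₁u − B₁B + (p + |B|²/2)e₁, u₁B − B₁u, (E+p+|B|²/2)u₁ − (u·B)B₁),
    -- plus φ(v)B₁ with φ(v) = 2β(u·B), minus F₁ = −ρsu₁/(γ−1)
    ((γ - s) / (γ - 1) - β * (u 0 ^ 2 + u 1 ^ 2 + u 2 ^ 2)) * (ρ * u 0)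
      + (2 * β * u 0) * (ρ * u 0 * u 0 - B 0 * B 0 + (p + (B 0 ^ 2 + B 1 ^ 2 + B 2 ^ 2) / 2))
      + (2 * β * u 1) * (ρ * u 0 * u 1 - B 0 * B 1)
      + (2 * β * u 2) * (ρ * u 0 * u 2 - B 0 * B 2)
      + (2 * β * B 0) * (u 0 * B 0 - B 0 * u 0)
      + (2 * β * B 1) * (u 0 * B 1 - B 0 * u 1)
      + (2 * β * B 2) * (u 0 * B 2 - B 0 * u 2)
      + (-2 * β) * ((E + p + (B 0 ^ 2 + B 1 ^ 2 + B 2 ^ 2) / 2) * u 0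
          - (u 0 * B 0 + u 1 * B 1 + u 2 * B 2) * B 0)
      + (2 * β * (u 0 * B 0 + u 1 * B 1 + u 2 * B 2)) * B 0
      - (-(ρ * s * u 0) / (γ - 1))
    = (ρ + β * (B 0 ^ 2 + B 1 ^ 2 + B 2 ^ 2)) * u 0 := by
  subst hE hβ
  have h1 : γ - 1 ≠ 0 := by linarith
  have h2 : p ≠ 0 := hp.ne'
  field_simp
  ring
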